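/- For two finite sets of distinct positive real numbers 0 < a_1 < ... < a_n and 0 < b_1 < ... < b_n, the n×n matrix M with entries M_{i,j} = a_i^{b_j} has nonzero determinant. -/

import Mathlib

open Finset

lemma aux_cheb : ∀ (n : ℕ) (b : Fin n → ℝ), StrictMono b → ∀ c x : Fin n → ℝ,
    (∀ i, 0 < x i) → StrictMono x →
    (∀ i, ∑ j, c j * x i ^ b j = 0) → ∀ j, c j = 0 := by
  intro n
  induction n with
  | zero => intro _ _ _ _ _ _ _ j; exact j.elim0
  | succ n ih =>
    intro b hb c x hx hxm hz
    set g : ℝ → ℝ := fun t => ∑ j, c j * t ^ (b j - b 0) with hg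
    have hgderiv : ∀ t : ℝ, 0 < t →
        HasDerivAt g (∑ j, c j * ((b j - b 0) * t ^ (b j - b 0 - 1))) t := by
      intro t ht
      apply HasDerivAt.fun_sum
      intro j _
      exact (Real.hasDerivAt_rpow_const (Or.inl ht.ne')).const_mul (c j)
    have hgzero : ∀ i, g (x i) = 0 := by
      intro i
      have : g (x i) = (∑ j, c j * x i ^ b j) / x i ^ (b 0) := by
        rw [hg, Finset.sum_div]
        apply Finset.sum_congr rfl
        intro j _
        rw [Real.rpow_sub (hx i), mul_div_assoc]
      rw [this, hz i, zero_div]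
    have hroll : ∀ i : Fin n, ∃ t ∈ Set.Ioo (x i.castSucc) (x i.succ),
        (∑ j, c j * ((b j - b 0) * t ^ (b j - b 0 - 1))) = 0 := by
      intro i
      have hlt : x i.castSucc < x i.succ := hxm (Fin.castSucc_lt_succ : i.castSucc < i.succ)
      have hposIcc : ∀ t ∈ Set.Icc (x i.castSucc) (x i.succ), 0 < t := by
        intro t ht
        exact lt_of_lt_of_le (hx i.castSucc) ht.1
      refine exists_hasDerivAt_eq_zero (f := g)
        (f' := fun t => ∑ j, c j * ((b j - b 0) * t ^ (b j - b 0 - 1))) hlt ?_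
        (by rw [hgzero, hgzero]) ?_
      · intro t ht
        exact (hgderiv t (hposIcc t ht)).continuousAt.continuousWithinAt
      · intro t ht
        exact hgderiv t (hposIcc t ⟨le_of_lt ht.1, le_of_lt ht.2⟩)
    choose y hy hyz using hroll
    have hypos : ∀ i, 0 < y i := fun i => lt_of_le_of_lt (hx i.castSucc).le (hy i).1
    have hymono : StrictMono y := by
      intro i j hij
      have h1 : y i < x i.succ := (hy i).2
      have h2 : x j.castSucc < y j := (hy j).1
      have h3 : x i.succ ≤ x j.castSucc := by
        apply hxm.monotone
        rw [Fin.le_def]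
        simpa using hij
      linarith
    have hd : ∀ j : Fin n, c j.succ * (b j.succ - b 0) = 0 := by
      refine ih (fun j => b j.succ - b 0 - 1) ?_ (fun j => c j.succ * (b j.succ - b 0)) y
        hypos hymono ?_
      · intro p q hpq
        have := hb (Fin.succ_lt_succ_iff.mpr hpq)
        simp only [sub_lt_sub_iff_right]
        linarith
      · intro i
        have := hyz i
        rw [Fin.sum_univ_succ] at this
        simp only [sub_self, Real.rpow_natCast, zero_mul, mul_zero, zero_add] at this
        calc ∑ j : Fin n, c j.succ * (b j.succ - b 0) * y i ^ (b j.succ - b 0 - 1)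
            = ∑ j : Fin n, c j.succ * ((b j.succ - b 0) * y i ^ (b j.succ - b 0 - 1)) := by
              apply Finset.sum_congr rfl; intro j _; ring
          _ = 0 := this
    have hcs : ∀ j : Fin n, c j.succ = 0 := by
      intro j
      rcases mul_eq_zero.mp (hd j) with h | h
      · exact h
      · exfalso
        have : b 0 < b j.succ := hb (Fin.succ_pos j)
        have := sub_ne_zero.mpr this.ne'
        exact this h
    have hc0 : c 0 = 0 := by
      have h0 := hz 0
      rw [Fin.sum_univ_succ] at h0
      simp only [hcs, zero_mul, Finset.sum_const_zero, add_zero] at h0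
      have : (0:ℝ) < x 0 ^ b 0 := Real.rpow_pos_of_pos (hx 0) _
      rcases mul_eq_zero.mp h0 with h | h
      · exact h
      · exact absurd h this.ne'
    intro j
    refine Fin.cases ?_ ?_ j
    · exact hc0
    · exact hcs

theorem stmt_0 (n : ℕ) (a b : Fin n → ℝ)
    (ha_pos : ∀ i, 0 < a i) (hb_pos : ∀ i, 0 < b i)
    (ha : StrictMono a) (hb : StrictMono b) :
    Matrix.det (Matrix.of fun i j => (a i) ^ (b j)) ≠ 0 := by
  intro hdet
  obtain ⟨v, hv, hMv⟩ := (Matrix.exists_mulVec_eq_zero_iff).mpr hdet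
  have hall : ∀ j, v j = 0 := by
    refine aux_cheb n b hb v a ha_pos ha ?_
    intro i
    have := congrFun hMv i
    simpa [Matrix.mulVec, dotProduct, mul_comm] using this
  exact hv (funext hall)
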